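/- Let F be a finite field with q elements, n a positive natural number, and A, B, C be n×n matrices over F with AB ≠ C. Then the number of vectors v ∈ F^n satisfying A(Bv) = Cv is at most q^(n-1). -/

import Mathlib

theorem freivalds_soundness (F : Type*) [Field F] [Fintype F] (q : ℕ)
    (hq : Fintype.card F = q) (n : ℕ) (hn : 0 < n)
    (A B C : Matrix (Fin n) (Fin n) F) (hne : A * B ≠ C) :
    Nat.card {v : Fin n → F // A.mulVec (B.mulVec v) = C.mulVec v} ≤ q ^ (n - 1) := by
  set M : Matrix (Fin n) (Fin n) F := A * B - C with hM
  have hMne : M ≠ 0 := sub_ne_zero.mpr hne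
  set K := LinearMap.ker M.mulVecLin with hK
  have hset : ∀ v : Fin n → F, (A.mulVec (B.mulVec v) = C.mulVec v) ↔ v ∈ K := by
    intro v
    rw [hK, LinearMap.mem_ker, Matrix.mulVecLin_apply, hM, Matrix.sub_mulVec,
      sub_eq_zero, Matrix.mulVec_mulVec]
  have hequiv : {v : Fin n → F // A.mulVec (B.mulVec v) = C.mulVec v} ≃ K :=
    Equiv.subtypeEquivRight hset
  rw [Nat.card_congr hequiv]
  have hKne : K ≠ ⊤ := by
    intro h
    apply hMne
    ext i j
    have : M.mulVec (Pi.single j 1) = 0 := by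
      have : (Pi.single j 1 : Fin n → F) ∈ K := h ▸ Submodule.mem_top
      simpa [hK, LinearMap.mem_ker] using this
    have := congrFun this i
    simpa [Matrix.mulVec_single] using this
  have hrank : Module.finrank F K < n := by
    have := Submodule.finrank_lt (K := F) (V := Fin n → F) hKne
    simpa using this
  have hcard : Nat.card K = q ^ Module.finrank F K := by
    classical
    have : Fintype K := Fintype.ofFinite K
    rw [Nat.card_eq_fintype_card, Module.card_eq_pow_finrank (K := F), hq]
  rw [hcard]
  rcases Nat.eq_zero_or_pos q with rfl | hqpos
  · exact absurd hq Fintype.card_ne_zero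
  · exact Nat.pow_le_pow_right hqpos (by omega)
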